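/- Let H be a Hilbert space and u, v : [0,T] → H bounded and weakly continuous. With u_h, v_h the Friedrichs time-mollifications (using an even mollifier j_h), one has lim_{h→0} ⟨u(t), v_h(t)⟩ = lim_{h→0} ⟨u_h(t), v(t)⟩ = (1/2)⟨u(t), v(t)⟩ for each t in the interior of [0,T], where the factor 1/2 arises because only half the mass of j_h lies to one side of t at the endpoint of the integration interval. -/

import Mathlib

open MeasureTheory Filter Set

lemma countable_of_orthonormal {H : Type*} [NormedAddCommGroup H] [InnerProductSpace ℝ H]
    [SecondCountableTopology H] {w : Set H} (hw : Orthonormal ℝ ((↑) : w → H)) :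
    Countable w := by
  haveI : Nonempty H := ⟨0⟩
  have hDd : DenseRange (TopologicalSpace.denseSeq H) := TopologicalSpace.denseRange_denseSeq H
  rw [Metric.denseRange_iff] at hDd
  have : ∀ i : w, ∃ n : ℕ, dist (i : H) (TopologicalSpace.denseSeq H n) < 1/2 :=
    fun i => hDd i (1/2) (by norm_num)
  choose f hf using this
  refine Function.Injective.countable (f := f) fun i k hik => ?_
  by_contra hne
  have h2 : ‖(i : H) - (k : H)‖ ^ 2 = 2 := by
    rw [norm_sub_sq_real]
    have h0 : (inner ℝ (i : H) (k : H) : ℝ) = 0 := hw.2 (Subtype.coe_ne_coe.mp ?_) 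
    · rw [hw.1 i, hw.1 k, h0]; ring
    · exact fun hc => hne (Subtype.coe_injective hc)
  have hd : dist (i : H) (k : H) < 1 := by
    calc dist (i : H) (k : H) ≤ dist (i : H) (TopologicalSpace.denseSeq H (f i))
        + dist (TopologicalSpace.denseSeq H (f k)) (k : H) := by
          rw [hik]; exact dist_triangle _ _ _
    _ < 1/2 + 1/2 := by
          have := hf i
          have h2 := hf k
          rw [dist_comm] at h2
          linarith
    _ = 1 := by norm_num
  rw [dist_eq_norm] at hd
  nlinarith [norm_nonneg ((i:H) - (k:H))]

lemma stronglyMeasurable_of_weakly_continuous {H : Type*} [NormedAddCommGroup H]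
    [InnerProductSpace ℝ H] [CompleteSpace H] [SecondCountableTopology H]
    (g : ℝ → H) (hg : ∀ w : H, Continuous fun τ => (inner ℝ w (g τ) : ℝ)) :
    StronglyMeasurable g := by
  classical
  obtain ⟨w, b, hb⟩ := exists_hilbertBasis ℝ H
  haveI : Countable w := by
    have h1 := b.orthonormal
    have h2 : Orthonormal ℝ ((↑) : w → H) := hb ▸ h1
    exact countable_of_orthonormal h2
  haveI : Nonempty (Finset w) := ⟨∅⟩
  refine stronglyMeasurable_of_tendsto (atTop : Filter (Finset w))
    (f := fun A τ => ∑ i ∈ A, (b.repr (g τ) i : ℝ) • (b i : H)) (fun A => ?_) ?_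
  · refine Finset.stronglyMeasurable_fun_sum A fun i _ => StronglyMeasurable.smul ?_ stronglyMeasurable_const
    have : (fun τ => (b.repr (g τ) i : ℝ)) = fun τ => (inner ℝ (b i) (g τ) : ℝ) := by
      funext τ; exact b.repr_apply_apply (g τ) i
    rw [this]
    exact (hg (b i)).stronglyMeasurable
  · rw [tendsto_pi_nhds]
    intro τ
    exact (b.hasSum_repr (g τ))

lemma j_half (j : ℝ → ℝ) (hjcont : Continuous j) (hjeven : ∀ s, j (-s) = j s)
    (hjsupp : Function.support j ⊆ Set.Ioo (-1) 1) (hjint : ∫ s, j s = 1) :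
    ∫ s in (0:ℝ)..1, j s = 1/2 := by
  have hcs : HasCompactSupport j := by
    apply HasCompactSupport.of_support_subset_isCompact (isCompact_Icc (a := (-1:ℝ)) (b := 1))
    exact hjsupp.trans Ioo_subset_Icc_self
  have hint : Integrable j := hjcont.integrable_of_hasCompactSupport hcs
  have hsym : ∫ s in Iic (0:ℝ), j s = ∫ s in Ioi (0:ℝ), j s := by
    have := integral_comp_neg_Iic (0:ℝ) j
    rw [neg_zero] at this
    simp_rw [hjeven] at this
    exact this
  have hsplit : (∫ s in Iic (0:ℝ), j s) + ∫ s in Ioi (0:ℝ), j s = 1 := by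
    rw [intervalIntegral.integral_Iic_add_Ioi hint.integrableOn hint.integrableOn, hjint]
  have hIoi : ∫ s in Ioi (0:ℝ), j s = 1/2 := by rw [hsym] at hsplit; linarith
  have hzero : ∫ s in Ioi (1:ℝ), j s = 0 := by
    apply setIntegral_eq_zero_of_forall_eq_zero
    intro x hx
    by_contra hne
    exact absurd (hjsupp hne).2 (not_lt.mpr (le_of_lt hx))
  have hunion : (∫ s in Ioc (0:ℝ) 1, j s) + ∫ s in Ioi (1:ℝ), j s = ∫ s in Ioi (0:ℝ), j s := by
    rw [← setIntegral_union (Ioc_disjoint_Ioi le_rfl) measurableSet_Ioi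
      hint.integrableOn hint.integrableOn, Ioc_union_Ioi_eq_Ioi zero_le_one]
  rw [intervalIntegral.integral_of_le zero_le_one]
  rw [hzero, add_zero] at hunion
  rw [hunion, hIoi]

lemma scalar_half (T : ℝ) (j : ℝ → ℝ) (hjcont : Continuous j) (hjeven : ∀ s, j (-s) = j s)
    (hjnonneg : ∀ s, 0 ≤ j s) (hjsupp : Function.support j ⊆ Set.Ioo (-1) 1)
    (hjint : ∫ s, j s = 1) (f : ℝ → ℝ) (hf : ContinuousOn f (Set.Icc 0 T))
    (M : ℝ) (hM : ∀ τ ∈ Set.Icc 0 T, |f τ| ≤ M)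
    (t : ℝ) (ht0 : 0 < t) (htT : t < T) :
    Tendsto (fun h : ℝ => ∫ s in (0:ℝ)..t, (h⁻¹ * j ((t - s)/h)) * f s)
      (nhdsWithin 0 (Set.Ioi 0)) (nhds ((1/2) * f t)) := by
  have hmem : Ioo (0:ℝ) t ∈ nhdsWithin (0:ℝ) (Ioi 0) :=
    Ioo_mem_nhdsGT_of_mem ⟨le_refl 0, ht0⟩
  -- the change of variables identity
  have key : ∀ h ∈ Ioo (0:ℝ) t,
      (∫ s in (0:ℝ)..t, (h⁻¹ * j ((t - s)/h)) * f s)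
      = ∫ σ in (0:ℝ)..1, j σ * f (t - h*σ) := by
    intro h hh
    have hh0 : (0:ℝ) < h := hh.1
    have hhne : h ≠ 0 := ne_of_gt hh0
    set F : ℝ → ℝ := fun x => j x * f (t - h*x) with hFdef
    have h1 : ∀ s, (h⁻¹ * j ((t - s)/h)) * f s = h⁻¹ * F ((t - s)/h) := by
      intro s
      have : t - h * ((t - s)/h) = s := by field_simp; ring
      rw [hFdef]; simp only []; rw [this]; ring
    have hFcont : ContinuousOn F (Icc 0 (t/h)) := by
      apply (hjcont.continuousOn).mul
      apply hf.comp ((continuous_const.sub (continuous_const.mul continuous_id)).continuousOn)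
      intro x hx
      have hxt : x * h ≤ t := (le_div_iff₀ hh0).mp hx.2
      have hx0 : 0 ≤ h * x := mul_nonneg hh0.le hx.1
      constructor <;> simp only [Pi.sub_apply, Pi.mul_apply, id_eq] <;> nlinarith
    have hth : (1:ℝ) ≤ t/h := (one_le_div hh0).mpr hh.2.le
    have hi1 : IntervalIntegrable F volume 0 1 := by
      apply ContinuousOn.intervalIntegrable
      apply hFcont.mono
      rw [uIcc_of_le zero_le_one]
      exact Icc_subset_Icc le_rfl hth
    have hi2 : IntervalIntegrable F volume 1 (t/h) := by
      apply ContinuousOn.intervalIntegrable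
      apply hFcont.mono
      rw [uIcc_of_le hth]
      exact Icc_subset_Icc zero_le_one le_rfl
    have hz : ∫ x in (1:ℝ)..(t/h), F x = 0 := by
      have heq : EqOn F (fun _ => (0:ℝ)) (uIcc 1 (t/h)) := by
        intro x hx
        rw [uIcc_of_le hth] at hx
        have : j x = 0 := by
          by_contra hne
          exact absurd (hjsupp hne).2 (not_lt.mpr hx.1)
        simp [hFdef, this]
      rw [intervalIntegral.integral_congr heq]
      simp
    have hsplit := intervalIntegral.integral_add_adjacent_intervals hi1 hi2
    calc (∫ s in (0:ℝ)..t, (h⁻¹ * j ((t - s)/h)) * f s)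
        = ∫ s in (0:ℝ)..t, h⁻¹ * F ((t - s)/h) := by
          apply intervalIntegral.integral_congr; intro s _; exact h1 s
      _ = h⁻¹ * ∫ s in (0:ℝ)..t, F ((t - s)/h) := intervalIntegral.integral_const_mul _ _
      _ = h⁻¹ * ∫ x in (t - t)..(t - 0), F (x/h) :=
          by rw [intervalIntegral.integral_comp_sub_left (fun x => F (x/h)) t]
      _ = h⁻¹ * ∫ x in (0:ℝ)..t, F (x/h) := by norm_num
      _ = h⁻¹ * (h • ∫ x in (0/h)..(t/h), F x) := by
          rw [intervalIntegral.integral_comp_div _ hhne]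
      _ = ∫ x in (0:ℝ)..(t/h), F x := by
          rw [zero_div, smul_eq_mul, inv_mul_cancel_left₀ hhne]
      _ = ∫ x in (0:ℝ)..1, F x := by rw [← hsplit, hz, add_zero]
  -- the dominated convergence limit
  have hDCT : Tendsto (fun h : ℝ => ∫ σ in (0:ℝ)..1, j σ * f (t - h*σ))
      (nhdsWithin 0 (Ioi 0)) (nhds (∫ σ in (0:ℝ)..1, j σ * f t)) := by
    apply intervalIntegral.tendsto_integral_filter_of_dominated_convergence
      (bound := fun σ => j σ * M)
    · filter_upwards [hmem] with h hh
      apply ContinuousOn.aestronglyMeasurable _ measurableSet_uIoc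
      rw [uIoc_of_le zero_le_one]
      apply (hjcont.continuousOn).mul
      apply hf.comp ((continuous_const.sub (continuous_const.mul continuous_id)).continuousOn)
      intro x hx
      rcases hx with ⟨hx0, hx1⟩
      have := hh.1; have := hh.2
      constructor <;> simp only [Pi.sub_apply, Pi.mul_apply, id_eq] <;> nlinarith
    · filter_upwards [hmem] with h hh
      apply Filter.Eventually.of_forall
      intro x hx
      rw [uIoc_of_le zero_le_one] at hx
      have hmem2 : t - h*x ∈ Icc 0 T := by
        rcases hx with ⟨hx0, hx1⟩
        have := hh.1; have := hh.2
        constructor <;> [nlinarith; nlinarith]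
      rw [Real.norm_eq_abs, abs_mul, abs_of_nonneg (hjnonneg x)]
      exact mul_le_mul_of_nonneg_left (hM _ hmem2) (hjnonneg x)
    · exact (hjcont.mul continuous_const).intervalIntegrable 0 1
    · apply Filter.Eventually.of_forall
      intro x hx
      rw [uIoc_of_le zero_le_one] at hx
      have hct : ContinuousWithinAt f (Icc 0 T) t := hf t ⟨ht0.le, htT.le⟩
      have h1 : Tendsto (fun h : ℝ => t - h*x) (nhdsWithin 0 (Ioi 0)) (nhdsWithin t (Icc 0 T)) := by
        rw [tendsto_nhdsWithin_iff]
        constructor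
        · have h2 : Tendsto (fun h : ℝ => t - h*x) (nhds 0) (nhds (t - 0*x)) :=
            (continuous_const.sub (continuous_id.mul continuous_const)).tendsto 0
          rw [zero_mul, sub_zero] at h2
          exact h2.mono_left nhdsWithin_le_nhds
        · filter_upwards [hmem] with h hh
          rcases hx with ⟨hx0, hx1⟩
          have := hh.1; have := hh.2
          constructor <;> nlinarith
      exact (hct.tendsto.comp h1).const_mul (j x)
  have hval : (∫ σ in (0:ℝ)..1, j σ * f t) = (1/2) * f t := by
    rw [intervalIntegral.integral_mul_const, j_half j hjcont hjeven hjsupp hjint]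
  rw [hval] at hDCT
  exact hDCT.congr' (Filter.eventuallyEq_of_mem hmem key).symm

lemma vector_half {H : Type*} [NormedAddCommGroup H] [InnerProductSpace ℝ H] [CompleteSpace H]
    [SecondCountableTopology H]
    (T : ℝ) (hT : 0 < T) (a : H) (v : ℝ → H) (M : ℝ)
    (hvM : ∀ τ ∈ Set.Icc 0 T, ‖v τ‖ ≤ M)
    (hvw : ∀ w : H, ContinuousOn (fun τ => (inner ℝ w (v τ) : ℝ)) (Set.Icc 0 T))
    (j : ℝ → ℝ) (hjcont : Continuous j) (hjeven : ∀ s, j (-s) = j s)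
    (hjnonneg : ∀ s, 0 ≤ j s) (hjsupp : Function.support j ⊆ Set.Ioo (-1) 1)
    (hjint : ∫ s, j s = 1)
    (t : ℝ) (ht0 : 0 < t) (htT : t < T) :
    Tendsto (fun h : ℝ => (inner ℝ a (∫ s in (0:ℝ)..t, (h⁻¹ * j ((t - s)/h)) • v s) : ℝ))
      (nhdsWithin 0 (Set.Ioi 0)) (nhds ((1/2) * (inner ℝ a (v t) : ℝ))) := by
  -- clamped version of v is globally weakly continuous
  set clamp : ℝ → ℝ := fun τ => max 0 (min τ T) with hclamp
  have hclampcont : Continuous clamp := (continuous_const.max (continuous_id.min continuous_const))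
  have hclampmem : ∀ τ, clamp τ ∈ Icc 0 T :=
    fun τ => ⟨le_max_left _ _, max_le hT.le (min_le_right _ _)⟩
  have hclampid : ∀ τ ∈ Icc (0:ℝ) T, clamp τ = τ := by
    intro τ hτ; rw [hclamp]; simp only
    rw [min_eq_left hτ.2, max_eq_right hτ.1]
  set g : ℝ → H := fun τ => v (clamp τ) with hg
  have hgm : StronglyMeasurable g := by
    apply stronglyMeasurable_of_weakly_continuous
    intro w
    exact (hvw w).comp_continuous hclampcont hclampmem
  have hvae : AEStronglyMeasurable v (volume.restrict (Ioc 0 t)) := by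
    apply hgm.aestronglyMeasurable.congr
    filter_upwards [ae_restrict_mem measurableSet_Ioc] with τ hτ
    rw [hg]; simp only
    rw [hclampid τ ⟨hτ.1.le, hτ.2.trans htT.le⟩]
  -- bound on j
  have hcs : HasCompactSupport j := by
    apply HasCompactSupport.of_support_subset_isCompact (isCompact_Icc (a := (-1:ℝ)) (b := 1))
    exact hjsupp.trans Ioo_subset_Icc_self
  obtain ⟨C, hC⟩ := hjcont.bounded_above_of_compact_support hcs
  have hC' : ∀ x, j x ≤ C := fun x => le_trans (le_abs_self _)
    (by rw [← Real.norm_eq_abs]; exact hC x)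
  have hC0 : 0 ≤ C := le_trans (hjnonneg 0) (hC' 0)
  have hM0 : 0 ≤ M := le_trans (norm_nonneg (v 0)) (hvM 0 ⟨le_refl 0, hT.le⟩)
  -- integrability of the vector integrand for h > 0
  have hInt : ∀ h : ℝ, 0 < h →
      IntervalIntegrable (fun s => (h⁻¹ * j ((t - s)/h)) • v s) volume 0 t := by
    intro h hh
    rw [intervalIntegrable_iff_integrableOn_Ioc_of_le ht0.le]
    have hker : Continuous fun s => h⁻¹ * j ((t - s)/h) :=
      continuous_const.mul (hjcont.comp ((continuous_const.sub continuous_id).div_const h))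
    apply Integrable.mono' (g := fun _ => h⁻¹ * C * M)
    · exact integrableOn_const measure_Ioc_lt_top.ne
    · exact (hker.aestronglyMeasurable).smul hvae
    · filter_upwards [ae_restrict_mem measurableSet_Ioc] with s hs
      rw [norm_smul, Real.norm_eq_abs, abs_mul, abs_of_nonneg (inv_nonneg.mpr hh.le),
        abs_of_nonneg (hjnonneg _)]
      have h1 : h⁻¹ * j ((t - s)/h) ≤ h⁻¹ * C :=
        mul_le_mul_of_nonneg_left (hC' _) (inv_nonneg.mpr hh.le)
      have h2 : ‖v s‖ ≤ M := hvM s ⟨hs.1.le, hs.2.trans htT.le⟩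
      exact mul_le_mul h1 h2 (norm_nonneg _) (by positivity)
  -- move the inner ℝ product inside the integral
  have hkey : ∀ h : ℝ, 0 < h →
      (inner ℝ a (∫ s in (0:ℝ)..t, (h⁻¹ * j ((t - s)/h)) • v s) : ℝ)
      = ∫ s in (0:ℝ)..t, (h⁻¹ * j ((t - s)/h)) * (inner ℝ a (v s) : ℝ) := by
    intro h hh
    have h0 := (innerSL ℝ a).intervalIntegral_comp_comm (hInt h hh)
    have h2 : (inner ℝ a (∫ s in (0:ℝ)..t, (h⁻¹ * j ((t - s)/h)) • v s) : ℝ)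
        = innerSL ℝ a (∫ s in (0:ℝ)..t, (h⁻¹ * j ((t - s)/h)) • v s) := rfl
    rw [h2, ← h0]
    apply intervalIntegral.integral_congr
    intro s _
    simp [innerSL_apply_apply, real_inner_smul_right]
  -- conclude via the scalar lemma
  have hsc := scalar_half T j hjcont hjeven hjnonneg hjsupp hjint
    (fun τ => (inner ℝ a (v τ) : ℝ)) (hvw a) (‖a‖ * M)
    (fun τ hτ => le_trans (abs_real_inner_le_norm a (v τ))
      (mul_le_mul_of_nonneg_left (hvM τ hτ) (norm_nonneg a)))
    t ht0 htT
  apply hsc.congr'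
  filter_upwards [self_mem_nhdsWithin] with h hh
  exact (hkey h hh).symm

/-- Property (5.8) of Friedrichs time-mollifiers: for bounded, weakly continuous
`u, v : [0,T] → H` and the mollifications `u_h, v_h` over `[0,t]` built from an
even, nonnegative `j` supported in `(−1,1)` with unit integral
(`j_h(s) = h⁻¹ j(s/h)`), one has
`lim_{h→0⁺} ⟨u(t), v_h(t)⟩ = lim_{h→0⁺} ⟨u_h(t), v(t)⟩ = (1/2)⟨u(t), v(t)⟩`
at every interior time `t`, since only half the mass of `j_h` lies inside the
integration interval at its endpoint. -/
theorem mollifier_half_limit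
    {H : Type*} [NormedAddCommGroup H] [InnerProductSpace ℝ H] [CompleteSpace H]
    [SecondCountableTopology H]
    (T : ℝ) (hT : 0 < T) (u v : ℝ → H)
    (hubdd : ∃ M, ∀ τ ∈ Set.Icc 0 T, ‖u τ‖ ≤ M ∧ ‖v τ‖ ≤ M)
    (huw : ∀ w : H, ContinuousOn (fun τ => (inner ℝ w (u τ) : ℝ)) (Set.Icc 0 T))
    (hvw : ∀ w : H, ContinuousOn (fun τ => (inner ℝ w (v τ) : ℝ)) (Set.Icc 0 T))
    (j : ℝ → ℝ) (hjcont : Continuous j) (hjeven : ∀ s, j (-s) = j s)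
    (hjnonneg : ∀ s, 0 ≤ j s) (hjsupp : Function.support j ⊆ Set.Ioo (-1) 1)
    (hjint : ∫ s, j s = 1)
    (t : ℝ) (ht0 : 0 < t) (htT : t < T) :
    Filter.Tendsto
        (fun h : ℝ => (inner ℝ (u t) (∫ s in (0:ℝ)..t, (h⁻¹ * j ((t - s)/h)) • v s) : ℝ))
        (nhdsWithin 0 (Set.Ioi 0)) (nhds ((1/2) * (inner ℝ (u t) (v t) : ℝ))) ∧
    Filter.Tendsto
        (fun h : ℝ => (inner ℝ (∫ s in (0:ℝ)..t, (h⁻¹ * j ((t - s)/h)) • u s) (v t) : ℝ))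
        (nhdsWithin 0 (Set.Ioi 0)) (nhds ((1/2) * (inner ℝ (u t) (v t) : ℝ))) := by
  obtain ⟨M, hM⟩ := hubdd
  constructor
  · exact vector_half T hT (u t) v M (fun τ hτ => (hM τ hτ).2) hvw
      j hjcont hjeven hjnonneg hjsupp hjint t ht0 htT
  · have h1 := vector_half T hT (v t) u M (fun τ hτ => (hM τ hτ).1) huw
      j hjcont hjeven hjnonneg hjsupp hjint t ht0 htT
    have heq : (fun h : ℝ => (inner ℝ (∫ s in (0:ℝ)..t, (h⁻¹ * j ((t - s)/h)) • u s) (v t) : ℝ))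
        = fun h : ℝ => (inner ℝ (v t) (∫ s in (0:ℝ)..t, (h⁻¹ * j ((t - s)/h)) • u s) : ℝ) :=
      funext fun h => real_inner_comm _ _
    rw [heq, show (1/2) * (inner ℝ (u t) (v t) : ℝ) = (1/2) * (inner ℝ (v t) (u t) : ℝ) by
      rw [real_inner_comm]]
    exact h1
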